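/- Let R be a Noetherian local ring and A, B two m×n matrices over R. Then cok(A) ≅ cok(B) as R-modules if and only if there exist g ∈ GL_m(R) and g' ∈ GL_n(R) with g·A·g' = B. -/

import Mathlib

set_option synthInstance.maxHeartbeats 1000000
set_option maxHeartbeats 1000000
open Function Submodule LinearMap



/-- Two surjections from a finite free module over a field differ by an automorphism. -/
lemma two_surj {k V : Type*} [Field k] [AddCommGroup V] [Module k V] (n : ℕ)
    (f g : (Fin n → k) →ₗ[k] V) (hf : Surjective f) (hg : Surjective g) :
    ∃ α : (Fin n → k) ≃ₗ[k] (Fin n → k), f ∘ₗ (α : (Fin n → k) →ₗ[k] (Fin n → k)) = g := by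
  haveI : Module.Finite k V := Module.Finite.of_surjective f hf
  obtain ⟨C₁, hC₁⟩ := Submodule.exists_isCompl (LinearMap.ker f)
  obtain ⟨C₂, hC₂⟩ := Submodule.exists_isCompl (LinearMap.ker g)
  have hmapker : Submodule.map f (LinearMap.ker f) = ⊥ := by
    ext y
    simp only [Submodule.mem_map, LinearMap.mem_ker, Submodule.mem_bot]
    constructor
    · rintro ⟨x, hx, rfl⟩; exact hx
    · rintro rfl; exact ⟨0, map_zero f, map_zero f⟩
  have hfC₁ : Function.Bijective (f ∘ₗ C₁.subtype) := by
    constructor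
    · rw [← LinearMap.ker_eq_bot, LinearMap.ker_comp]
      exact Submodule.disjoint_iff_comap_eq_bot.1 hC₁.symm.disjoint
    · rw [← LinearMap.range_eq_top, LinearMap.range_comp, Submodule.range_subtype]
      have h := congrArg (Submodule.map f) hC₁.sup_eq_top
      rw [Submodule.map_sup, Submodule.map_top, LinearMap.range_eq_top.2 hf, hmapker,
        bot_sup_eq] at h
      exact h
  let eC : C₁ ≃ₗ[k] V := LinearEquiv.ofBijective (f ∘ₗ C₁.subtype) hfC₁
  let s : V →ₗ[k] (Fin n → k) := C₁.subtype ∘ₗ (eC.symm : V →ₗ[k] C₁)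
  have hs : ∀ y, f (s y) = y := by
    intro y
    conv_rhs => rw [← eC.apply_symm_apply y]
    rfl
  have hsmem : ∀ y, s y ∈ C₁ := fun y => Submodule.coe_mem _
  have hsinj : Function.Injective s := by
    intro a b hab
    have : eC.symm a = eC.symm b := Subtype.ext hab
    exact eC.symm.injective this
  have hrank : Module.finrank k (LinearMap.ker g) = Module.finrank k (LinearMap.ker f) := by
    have h1 := LinearMap.finrank_range_add_finrank_ker f
    have h2 := LinearMap.finrank_range_add_finrank_ker g
    rw [LinearMap.range_eq_top.2 hf] at h1
    rw [LinearMap.range_eq_top.2 hg] at h2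
    omega
  let e : (LinearMap.ker g) ≃ₗ[k] (LinearMap.ker f) := LinearEquiv.ofFinrankEq _ _ hrank
  let π₂ : (Fin n → k) →ₗ[k] (LinearMap.ker g) := (LinearMap.ker g).linearProjOfIsCompl C₂ hC₂
  let β : (Fin n → k) →ₗ[k] (Fin n → k) :=
    (LinearMap.ker f).subtype ∘ₗ (e : (LinearMap.ker g) →ₗ[k] (LinearMap.ker f)) ∘ₗ π₂ + s ∘ₗ g
  have hβapply : ∀ x, β x = ((e (π₂ x) : (Fin n → k))) + s (g x) := by
    intro x
    simp only [β, LinearMap.add_apply, LinearMap.comp_apply, Submodule.subtype_apply,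
      LinearEquiv.coe_coe]
  have hβinj : Function.Injective β := by
    intro x y hxy
    have hsub : β (x - y) = 0 := by rw [map_sub, hxy, sub_self]
    rw [← sub_eq_zero]
    set z := x - y with hz
    rw [hβapply] at hsub
    have h1 : ((e (π₂ z) : (Fin n → k))) ∈ LinearMap.ker f := (e (π₂ z)).2
    have h2 : s (g z) ∈ C₁ := hsmem _
    have hmem : ((e (π₂ z) : (Fin n → k))) ∈ LinearMap.ker f ⊓ C₁ := by
      refine ⟨h1, ?_⟩
      have : ((e (π₂ z) : (Fin n → k))) = - s (g z) := by
        rw [eq_neg_iff_add_eq_zero]; exact hsub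
      rw [this]
      exact neg_mem h2
    rw [hC₁.inf_eq_bot] at hmem
    have ha : ((e (π₂ z) : (Fin n → k))) = 0 := hmem
    have hb : s (g z) = 0 := by
      rw [ha, zero_add] at hsub; exact hsub
    have hgz : g z = 0 := by
      apply hsinj
      rw [map_zero]; exact hb
    have hπz : π₂ z = 0 := by
      have h0 : e (π₂ z) = 0 := Subtype.ext ha
      have h1 := congrArg e.symm h0
      rw [e.symm_apply_apply] at h1
      rw [h1]
      simp
    have hzker : z ∈ LinearMap.ker g := hgz
    have := Submodule.linearProjOfIsCompl_apply_left hC₂ ⟨z, hzker⟩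
    rw [show ((⟨z, hzker⟩ : LinearMap.ker g) : (Fin n → k)) = z from rfl] at this
    have : (⟨z, hzker⟩ : LinearMap.ker g) = 0 := by rw [← this]; exact hπz
    exact congrArg Subtype.val this
  have hβbij : Function.Bijective β := ⟨hβinj, (LinearMap.injective_iff_surjective).1 hβinj⟩
  refine ⟨LinearEquiv.ofBijective β hβbij, ?_⟩
  refine LinearMap.ext fun x => ?_
  show f (β x) = g x
  rw [hβapply, map_add, hs]
  have h1 : f ((e (π₂ x) : (Fin n → k))) = 0 := (e (π₂ x)).2
  rw [h1, zero_add]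



lemma field_lemma {k : Type*} [Field k] (n : ℕ) (W : Submodule k (Fin n → k))
    (X Y : Matrix (Fin n) (Fin n) k)
    (hXY : ∀ u : Fin n → k, (X * Y).mulVec u - u ∈ W) :
    ∃ X' : Matrix (Fin n) (Fin n) k, IsUnit X' ∧
      ∀ u : Fin n → k, X'.mulVec u - X.mulVec u ∈ W := by
  set q := W.mkQ with hq
  have hfsurj : Surjective q := W.mkQ_surjective
  have hgsurj : Surjective (q ∘ₗ X.mulVecLin) := by
    intro y
    obtain ⟨u, rfl⟩ := hfsurj y
    refine ⟨Y.mulVec u, ?_⟩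
    simp only [LinearMap.comp_apply, Matrix.mulVecLin_apply]
    rw [Matrix.mulVec_mulVec]
    exact (Submodule.Quotient.eq W).2 (hXY u)
  obtain ⟨α, hα⟩ := two_surj n q (q ∘ₗ X.mulVecLin) hfsurj hgsurj
  refine ⟨LinearMap.toMatrix' (α : (Fin n → k) →ₗ[k] (Fin n → k)), ?_, ?_⟩
  · refine isUnit_iff_exists.2 ⟨LinearMap.toMatrix' (α.symm : (Fin n → k) →ₗ[k] (Fin n → k)),
      ?_, ?_⟩
    · rw [← LinearMap.toMatrix'_comp]
      simp
    · rw [← LinearMap.toMatrix'_comp]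
      simp
  · intro u
    have h1 : (LinearMap.toMatrix' (α : (Fin n → k) →ₗ[k] (Fin n → k))).mulVec u = α u := by
      rw [← Matrix.toLin'_apply, Matrix.toLin'_toMatrix']
      rfl
    rw [h1]
    have h2 : q (α u) = q (X.mulVec u) := by
      have := LinearMap.congr_fun hα u
      simpa using this
    exact (Submodule.Quotient.eq W).1 h2



lemma mulVec_map' {R k : Type*} [CommRing R] [CommRing k] (π : R →+* k) {n : ℕ}
    (M : Matrix (Fin n) (Fin n) R) (c : Fin n → R) :
    (M.map π).mulVec (fun i => π (c i)) = fun i => π (M.mulVec c i) := by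
  funext i
  simp [Matrix.mulVec, dotProduct, map_sum]

/-- **Key lemma**: over a local ring, any two generating `n`-tuples of a module are
related by an invertible `n×n` matrix. -/
lemma gen_matrix {R M : Type*} [CommRing R] [IsLocalRing R] [AddCommGroup M] [Module R M]
    (n : ℕ) (v w : Fin n → M) (hv : span R (Set.range v) = ⊤)
    (hw : span R (Set.range w) = ⊤) :
    ∃ G : Matrix (Fin n) (Fin n) R, IsUnit G.det ∧ ∀ j, w j = ∑ i, G i j • v i := by
  classical
  set f : (Fin n → R) →ₗ[R] M := Fintype.linearCombination R v with hf
  set g : (Fin n → R) →ₗ[R] M := Fintype.linearCombination R w with hg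
  have hfs : Surjective f := by
    rw [← LinearMap.range_eq_top, hf, Fintype.range_linearCombination, hv]
  have hgs : Surjective g := by
    rw [← LinearMap.range_eq_top, hg, Fintype.range_linearCombination, hw]
  choose cX hcX using fun j => hfs (w j)
  choose cY hcY using fun j => hgs (v j)
  set X : Matrix (Fin n) (Fin n) R := Matrix.of (fun i j => cX j i) with hXdef
  set Y : Matrix (Fin n) (Fin n) R := Matrix.of (fun i j => cY j i) with hYdef
  have hcomb : ∀ (N : Matrix (Fin n) (Fin n) R) (u : Fin n → M) (c : Fin n → R),
      Fintype.linearCombination R u (N.mulVec c) =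
        ∑ j, c j • (Fintype.linearCombination R u (fun i => N i j)) := by
    intro N u c
    rw [Fintype.linearCombination_apply]
    have h1 : ∀ i, N.mulVec c i • u i = ∑ j, (c j • (N i j • u i)) := by
      intro i
      have : N.mulVec c i = ∑ j, N i j * c j := by
        simp [Matrix.mulVec, dotProduct]
      rw [this, Finset.sum_smul]
      refine Finset.sum_congr rfl fun j _ => ?_
      rw [mul_comm, mul_smul]
    simp only [h1]
    rw [Finset.sum_comm]
    refine Finset.sum_congr rfl fun j _ => ?_
    rw [Fintype.linearCombination_apply, Finset.smul_sum]
  have hfX : ∀ c : Fin n → R, f (X.mulVec c) = g c := by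
    intro c
    rw [hf, hcomb]
    have : ∀ j, Fintype.linearCombination R v (fun i => X i j) = w j := fun j => hcX j
    simp only [this]
    rw [hg, Fintype.linearCombination_apply]
  have hgY : ∀ c : Fin n → R, g (Y.mulVec c) = f c := by
    intro c
    rw [hg, hcomb]
    have : ∀ j, Fintype.linearCombination R w (fun i => Y i j) = v j := fun j => hcY j
    simp only [this]
    rw [hf, Fintype.linearCombination_apply]
  have hker : ∀ c : Fin n → R, f ((X * Y).mulVec c - c) = 0 := by
    intro c
    rw [map_sub, ← Matrix.mulVec_mulVec, hfX, hgY, sub_self]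
  -- pass to the residue field
  set k := IsLocalRing.ResidueField R with hk
  set π := IsLocalRing.residue R with hπ
  set Wbar : Submodule k (Fin n → k) :=
    { carrier := {x | ∃ c : Fin n → R, f c = 0 ∧ (fun i => π (c i)) = x}
      add_mem' := by
        rintro a b ⟨c, hc, rfl⟩ ⟨d, hd, rfl⟩
        refine ⟨c + d, by rw [map_add, hc, hd, add_zero], ?_⟩
        funext i; simp [map_add]
      zero_mem' := ⟨0, map_zero f, by funext i; simp⟩
      smul_mem' := by
        rintro a x ⟨c, hc, rfl⟩
        obtain ⟨r, rfl⟩ := IsLocalRing.residue_surjective a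
        refine ⟨r • c, by rw [map_smul, hc, smul_zero], ?_⟩
        funext i
        simp [map_mul, hπ] } with hWbar
  have hmemWbar : ∀ (c : Fin n → R), f c = 0 → (fun i => π (c i)) ∈ Wbar := by
    intro c hc; exact ⟨c, hc, rfl⟩
  have hXY : ∀ u : Fin n → k, ((X.map π) * (Y.map π)).mulVec u - u ∈ Wbar := by
    intro u
    choose c hc using fun i => IsLocalRing.residue_surjective (u i)
    have hu : u = fun i => π (c i) := by funext i; rw [hc i]
    rw [hu, ← Matrix.map_mul, mulVec_map']
    have : (fun i => π ((X * Y).mulVec c i)) - (fun i => π (c i)) =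
        fun i => π (((X * Y).mulVec c - c) i) := by
      funext i; simp [map_sub]
    rw [this]
    exact hmemWbar _ (hker c)
  obtain ⟨X', hX'unit, hX'⟩ := field_lemma n Wbar (X.map π) (Y.map π) hXY
  -- lift columns
  have hcol : ∀ j, ∃ z : Fin n → R, f z = 0 ∧
      (fun i => π (z i)) = fun i => X' i j - (X.map π) i j := by
    intro j
    obtain ⟨z, hz0, hz⟩ := hX' (Pi.single j 1)
    refine ⟨z, hz0, ?_⟩
    rw [hz]
    funext i
    rw [Pi.sub_apply, Matrix.mulVec_single_one, Matrix.mulVec_single_one]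
    rfl
  choose z hz0 hzval using hcol
  set G : Matrix (Fin n) (Fin n) R := X + Matrix.of (fun i j => z j i) with hGdef
  have hGmap : G.map π = X' := by
    ext i j
    have := congrFun (hzval j) i
    simp only [Matrix.map_apply, hGdef, Matrix.add_apply, Matrix.of_apply, map_add]
    rw [this]
    simp [Matrix.map_apply]
  refine ⟨G, ?_, ?_⟩
  · have hdet : π G.det = X'.det := by
      rw [← hGmap, RingHom.map_det]
      rfl
    have : IsUnit X'.det := (Matrix.isUnit_iff_isUnit_det _).1 hX'unit
    have hne : π G.det ≠ 0 := by
      rw [hdet]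
      exact this.ne_zero
    exact (IsLocalRing.residue_ne_zero_iff_isUnit _).1 hne
  · intro j
    have h1 : ∑ i, G i j • v i = ∑ i, X i j • v i + ∑ i, z j i • v i := by
      rw [← Finset.sum_add_distrib]
      refine Finset.sum_congr rfl fun i _ => ?_
      simp only [hGdef, Matrix.add_apply, Matrix.of_apply, add_smul]
    have h2 : ∑ i, X i j • v i = w j := by
      have := hcX j
      rw [hf] at *
      rw [← this, Fintype.linearCombination_apply]
      rfl
    have h3 : ∑ i, z j i • v i = 0 := by
      have := hz0 j
      rw [hf, Fintype.linearCombination_apply] at this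
      exact this
    rw [h1, h2, h3, add_zero]



lemma sum_single_eq {R : Type*} [CommRing R] {n : ℕ} (u : Fin n → R) :
    ∑ i, u i • (Pi.single i 1 : Fin n → R) = u := by
  funext j
  rw [Finset.sum_apply]
  simp [Pi.single_apply]

lemma mulVec_sum_single {R : Type*} [CommRing R] {m n : ℕ} (C : Matrix (Fin m) (Fin n) R)
    (c : Fin n → R) : C.mulVec c = ∑ j, c j • C.mulVec (Pi.single j 1) := by
  funext i
  rw [Finset.sum_apply]
  have h : ∀ j, (c j • C.mulVec (Pi.single j 1)) i = c j * C i j := by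
    intro j
    rw [Pi.smul_apply, Matrix.mulVec_single_one]
    rfl
  simp only [h]
  simp [Matrix.mulVec, dotProduct, mul_comm]

lemma span_range_top_of_surj {R M : Type*} [CommRing R] [AddCommGroup M] [Module R M]
    {m : ℕ} (F : (Fin m → R) →ₗ[R] M) (h : Surjective F) :
    span R (Set.range fun i => F (Pi.single i 1)) = ⊤ := by
  rw [eq_top_iff]
  rintro x -
  obtain ⟨u, rfl⟩ := h x
  rw [show u = ∑ i, u i • (Pi.single i 1 : Fin m → R) from (sum_single_eq u).symm, map_sum]
  refine Submodule.sum_mem _ fun i _ => ?_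
  rw [map_smul]
  exact Submodule.smul_mem _ _ (Submodule.subset_span ⟨i, rfl⟩)

lemma span_col_subtype {R : Type*} [CommRing R] {m n : ℕ} (C : Matrix (Fin m) (Fin n) R)
    (K : Submodule R (Fin m → R)) (hcol : ∀ j, C.mulVec (Pi.single j 1) ∈ K)
    (hle : K ≤ LinearMap.range C.mulVecLin) :
    span R (Set.range fun j => (⟨C.mulVec (Pi.single j 1), hcol j⟩ : K)) = ⊤ := by
  rw [eq_top_iff]
  rintro ⟨y, hy⟩ -
  obtain ⟨c, hc⟩ := hle hy
  have hc' : C.mulVec c = y := hc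
  have hsum : (⟨y, hy⟩ : K) = ∑ j, c j • (⟨C.mulVec (Pi.single j 1), hcol j⟩ : K) := by
    apply Subtype.ext
    have hcoe : (((∑ j, c j • (⟨C.mulVec (Pi.single j 1), hcol j⟩ : K)) : K) : Fin m → R)
        = ∑ j, c j • C.mulVec (Pi.single j 1) := by
      push_cast
      rfl
    rw [hcoe, ← mulVec_sum_single, hc']
  rw [hsum]
  exact Submodule.sum_mem _ fun j _ => Submodule.smul_mem _ _ (Submodule.subset_span ⟨j, rfl⟩)

/-- Let `R` be a Noetherian local ring and `A, B` two `m×n` matrices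
over `R`. Then `cok(A) ≅ cok(B)` as `R`-modules if and only if there exist
`g ∈ GL_m(R)` and `g' ∈ GL_n(R)` with `g·A·g' = B`. Here
`cok(A) = R^m / A·R^n`. -/
theorem stmt_4 (R : Type*) [CommRing R] [IsNoetherianRing R] [IsLocalRing R]
    (m n : ℕ) (A B : Matrix (Fin m) (Fin n) R) :
    Nonempty (((Fin m → R) ⧸ LinearMap.range A.mulVecLin) ≃ₗ[R]
        ((Fin m → R) ⧸ LinearMap.range B.mulVecLin)) ↔
      ∃ (g : Matrix.GeneralLinearGroup (Fin m) R)
        (g' : Matrix.GeneralLinearGroup (Fin n) R),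
        (g : Matrix (Fin m) (Fin m) R) * A * (g' : Matrix (Fin n) (Fin n) R) = B := by
  constructor
  · rintro ⟨φ⟩
    set πA := (LinearMap.range A.mulVecLin).mkQ with hπA
    set πB := (LinearMap.range B.mulVecLin).mkQ with hπB
    -- first application of gen_matrix : in cok B
    obtain ⟨G, hGdet, hGrel⟩ := gen_matrix m (fun i => πB (Pi.single i 1))
      (fun j => φ (πA (Pi.single j 1)))
      (span_range_top_of_surj πB (Submodule.mkQ_surjective _))
      (span_range_top_of_surj ((φ : ((Fin m → R) ⧸ LinearMap.range A.mulVecLin) →ₗ[R]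
          ((Fin m → R) ⧸ LinearMap.range B.mulVecLin)) ∘ₗ πA)
        (φ.surjective.comp (Submodule.mkQ_surjective _)))
    have hGu : IsUnit G := (Matrix.isUnit_iff_isUnit_det G).2 hGdet
    -- φ ∘ πA = πB ∘ G
    have hφπ : ((φ : ((Fin m → R) ⧸ LinearMap.range A.mulVecLin) →ₗ[R]
        ((Fin m → R) ⧸ LinearMap.range B.mulVecLin)) ∘ₗ πA) = πB ∘ₗ G.mulVecLin := by
      apply Module.Basis.ext (Pi.basisFun R (Fin m))
      intro j
      rw [Pi.basisFun_apply]
      have hrhs : (πB ∘ₗ G.mulVecLin) (Pi.single j 1) = ∑ i, G i j • πB (Pi.single i 1) := by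
        simp only [LinearMap.comp_apply, Matrix.mulVecLin_apply]
        have h1 : G.mulVec (Pi.single j 1) = ∑ i, G i j • (Pi.single i 1 : Fin m → R) := by
          rw [Matrix.mulVec_single_one]
          exact (sum_single_eq fun i => G i j).symm ▸ rfl
        rw [h1, map_sum]
        simp
      rw [hrhs]
      exact hGrel j
    have hφπ' : ∀ x, φ (πA x) = πB (G.mulVec x) := fun x => LinearMap.congr_fun hφπ x
    set Gu := hGu.unit with hGudef
    have hGuval : (Gu : Matrix (Fin m) (Fin m) R) = G := IsUnit.unit_spec hGu
    set Gi : Matrix (Fin m) (Fin m) R := ((Gu⁻¹ : (Matrix (Fin m) (Fin m) R)ˣ) :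
      Matrix (Fin m) (Fin m) R) with hGi
    have hGGi : G * Gi = 1 := by rw [← hGuval, hGi]; exact Units.mul_inv Gu
    have hmem1 : ∀ j, (G * A).mulVec (Pi.single j 1) ∈ LinearMap.range B.mulVecLin := by
      intro j
      rw [← Submodule.Quotient.mk_eq_zero, ← Submodule.mkQ_apply, ← hπB]
      rw [← Matrix.mulVec_mulVec, ← hφπ']
      have : πA (A.mulVec (Pi.single j 1)) = 0 := by
        rw [hπA, Submodule.mkQ_apply, Submodule.Quotient.mk_eq_zero]
        exact ⟨Pi.single j 1, rfl⟩
      rw [this, map_zero]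
    have hle : LinearMap.range B.mulVecLin ≤ LinearMap.range (G * A).mulVecLin := by
      rintro y ⟨x, rfl⟩
      have hy0 : πB (B.mulVec x) = 0 := by
        rw [hπB, Submodule.mkQ_apply, Submodule.Quotient.mk_eq_zero]
        exact ⟨x, rfl⟩
      have hz : φ (πA (Gi.mulVec (B.mulVec x))) = 0 := by
        rw [hφπ', Matrix.mulVec_mulVec, hGGi, Matrix.one_mulVec]
        exact hy0
      have hz0 : πA (Gi.mulVec (B.mulVec x)) = 0 := by
        have := φ.map_eq_zero_iff.1 hz
        exact this
      rw [hπA, Submodule.mkQ_apply, Submodule.Quotient.mk_eq_zero] at hz0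
      obtain ⟨x', hx'⟩ := hz0
      refine ⟨x', ?_⟩
      have : (G * A).mulVec x' = G.mulVec (A.mulVec x') := by rw [← Matrix.mulVec_mulVec]
      rw [Matrix.mulVecLin_apply, this]
      have hx'' : A.mulVec x' = Gi.mulVec (B.mulVec x) := hx'
      rw [hx'', Matrix.mulVec_mulVec, Matrix.mulVec_mulVec, hGGi, Matrix.one_mul]
      rfl
    -- second application of gen_matrix : in K = range B.mulVecLin
    have hmemB : ∀ j, B.mulVec (Pi.single j 1) ∈ LinearMap.range B.mulVecLin :=
      fun j => ⟨Pi.single j 1, rfl⟩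
    obtain ⟨G', hG'det, hG'rel⟩ := gen_matrix n
      (fun j => (⟨(G * A).mulVec (Pi.single j 1), hmem1 j⟩ :
        LinearMap.range B.mulVecLin))
      (fun j => (⟨B.mulVec (Pi.single j 1), hmemB j⟩ : LinearMap.range B.mulVecLin))
      (span_col_subtype (G * A) _ hmem1 hle)
      (span_col_subtype B _ hmemB le_rfl)
    have hG'u : IsUnit G' := (Matrix.isUnit_iff_isUnit_det G').2 hG'det
    refine ⟨Gu, hG'u.unit, ?_⟩
    rw [hGuval, IsUnit.unit_spec]
    -- prove G * A * G' = B column by column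
    have hcols : ∀ j, (G * A * G').mulVec (Pi.single j 1) = B.mulVec (Pi.single j 1) := by
      intro j
      have h1 := congrArg Subtype.val (hG'rel j)
      have hcoe : ((∑ i, G' i j • (⟨(G * A).mulVec (Pi.single i 1), hmem1 i⟩ :
          LinearMap.range B.mulVecLin) : LinearMap.range B.mulVecLin) : Fin m → R) =
          ∑ i, G' i j • (G * A).mulVec (Pi.single i 1) := by
        push_cast
        rfl
      have h2 : B.mulVec (Pi.single j 1) =
          ∑ i, G' i j • (G * A).mulVec (Pi.single i 1) := by
        rw [← hcoe]
        exact h1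
      rw [← Matrix.mulVec_mulVec, Matrix.mulVec_single_one,
        mulVec_sum_single (G * A) (G'.col j)]
      exact h2.symm
    apply Matrix.ext
    intro i j
    have := congrFun (hcols j) i
    rw [Matrix.mulVec_single_one, Matrix.mulVec_single_one] at this
    exact this
  · rintro ⟨g, g', rfl⟩
    set e : (Fin m → R) ≃ₗ[R] (Fin m → R) :=
      LinearEquiv.ofLinear ((g : Matrix (Fin m) (Fin m) R)).mulVecLin
        (((g⁻¹ : (Matrix (Fin m) (Fin m) R)ˣ) : Matrix (Fin m) (Fin m) R)).mulVecLin
        (by rw [← Matrix.mulVecLin_mul, Units.mul_inv, Matrix.mulVecLin_one])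
        (by rw [← Matrix.mulVecLin_mul, Units.inv_mul, Matrix.mulVecLin_one]) with he
    have hg'top : LinearMap.range ((g' : Matrix (Fin n) (Fin n) R)).mulVecLin = ⊤ := by
      rw [LinearMap.range_eq_top]
      intro y
      refine ⟨((g'⁻¹ : (Matrix (Fin n) (Fin n) R)ˣ) : Matrix (Fin n) (Fin n) R).mulVec y, ?_⟩
      rw [Matrix.mulVecLin_apply, Matrix.mulVec_mulVec, Units.mul_inv, Matrix.one_mulVec]
    have hmap : Submodule.map (e : (Fin m → R) →ₗ[R] (Fin m → R))
        (LinearMap.range A.mulVecLin) =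
        LinearMap.range ((g : Matrix (Fin m) (Fin m) R) * A *
          (g' : Matrix (Fin n) (Fin n) R)).mulVecLin := by
      have hce : (e : (Fin m → R) →ₗ[R] (Fin m → R)) =
          ((g : Matrix (Fin m) (Fin m) R)).mulVecLin := rfl
      rw [hce]
      rw [Matrix.mul_assoc, Matrix.mulVecLin_mul, LinearMap.range_comp]
      congr 1
      rw [Matrix.mulVecLin_mul, LinearMap.range_comp, hg'top, Submodule.map_top]
    exact ⟨Submodule.Quotient.equiv _ _ e hmap⟩
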